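/- If G is an SPN graph, then every subgraph H of G (a graph with V(H) ⊆ V(G) and E(H) ⊆ E(G)) is an SPN graph. -/

import Mathlib

open Matrix

/-- A real symmetric matrix `A` is *copositive* if `xᵀAx ≥ 0` for every
entrywise nonnegative vector `x`. -/
def Copositive {ι : Type*} [Fintype ι] (A : Matrix ι ι ℝ) : Prop :=
  ∀ x : ι → ℝ, (∀ i, 0 ≤ x i) → 0 ≤ x ⬝ᵥ A.mulVec x

/-- A real symmetric matrix is *SPN* if it is the sum of a positive semidefinite
matrix and a symmetric entrywise nonnegative matrix. -/
def IsSPN {ι : Type*} [Fintype ι] (A : Matrix ι ι ℝ) : Prop :=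
  ∃ P N : Matrix ι ι ℝ, P.PosSemidef ∧ N.IsSymm ∧ (∀ i j, 0 ≤ N i j) ∧ A = P + N

/-- The graph `G(A)` of a symmetric real matrix: `i ≠ j` are adjacent iff `A i j ≠ 0`. -/
def matrixGraph {ι : Type*} (A : Matrix ι ι ℝ) : SimpleGraph ι where
  Adj i j := i ≠ j ∧ (A i j ≠ 0 ∨ A j i ≠ 0)
  symm := by
    constructor
    intro i j h
    exact ⟨h.1.symm, h.2.symm⟩
  loopless := by
    constructor
    intro i h
    exact h.1 rfl

/-- A graph `G` is an *SPN graph* if every copositive symmetric real matrix whose graph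
is isomorphic to `G` is SPN. -/
def IsSPNGraph {V : Type*} [Fintype V] (G : SimpleGraph V) : Prop :=
  ∀ (n : ℕ) (A : Matrix (Fin n) (Fin n) ℝ), A.IsSymm → Copositive A →
    Nonempty (matrixGraph A ≃g G) → IsSPN A

section Aux

open Filter Topology

lemma psd_diag_nonneg {ι : Type*} [Fintype ι] [DecidableEq ι] {P : Matrix ι ι ℝ}
    (hP : P.PosSemidef) (i : ι) : 0 ≤ P i i := by
  simpa using hP.dotProduct_mulVec_nonneg (Pi.single i 1)

lemma psd_abs_bound {ι : Type*} [Fintype ι] [DecidableEq ι] {P : Matrix ι ι ℝ}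
    (hP : P.PosSemidef) (i j : ι) : 2 * |P i j| ≤ P i i + P j j := by
  rcases eq_or_ne i j with rfl | hij
  · have := psd_diag_nonneg hP i
    rw [abs_of_nonneg this]; linarith
  · have hsym : P j i = P i j := by
      have := hP.1.apply i j
      simpa using this
    have key : ∀ c : ℝ, 0 ≤ P i i + c * P i j + (c * P i j + c * (c * P j j)) := by
      intro c
      have h := hP.dotProduct_mulVec_nonneg (Pi.single i 1 + Pi.single j c)
      simp only [star_trivial, Matrix.mulVec_add, Matrix.mulVec_single, dotProduct_add,
        add_dotProduct, single_dotProduct, Pi.smul_apply, op_smul_eq_mul, Matrix.col_apply,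
        one_mul, mul_one, hsym] at h
      linear_combination h
    have h1 := key 1
    have h2 := key (-1)
    have h3 := abs_le.2 (⟨by nlinarith, by nlinarith⟩ :
      -((P i i + P j j)/2) ≤ P i j ∧ P i j ≤ (P i i + P j j)/2)
    linarith [h3]

lemma isSPN_limit {ι : Type*} [Fintype ι] [DecidableEq ι] (A : Matrix ι ι ℝ)
    (C : ℕ → Matrix ι ι ℝ) (hC : ∀ k, IsSPN (C k))
    (hlim : ∀ i j, Tendsto (fun k => C k i j) atTop (𝓝 (A i j))) : IsSPN A := by
  choose P N hP hN hNn hsum using hC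
  have hbdd : ∀ i j : ι, ∃ R, ∀ k, |C k i j| ≤ R := by
    intro i j
    have : Tendsto (fun k => |C k i j|) atTop (𝓝 |A i j|) := (hlim i j).abs
    obtain ⟨R, hR⟩ := this.bddAbove_range
    exact ⟨R, fun k => hR ⟨k, rfl⟩⟩
  choose R hR using hbdd
  set R0 : ℝ := (∑ p : ι × ι, |R p.1 p.2|) + 1 with hR0
  have hRle : ∀ i j, R i j ≤ R0 := by
    intro i j
    have h1 : |R i j| ≤ ∑ p : ι × ι, |R p.1 p.2| :=
      Finset.single_le_sum (f := fun p : ι × ι => |R p.1 p.2|)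
        (fun p _ => abs_nonneg _) (Finset.mem_univ (i, j))
    calc R i j ≤ |R i j| := le_abs_self _
    _ ≤ _ := by linarith
  have hCb : ∀ k i j, |C k i j| ≤ R0 := fun k i j => (hR i j k).trans (hRle i j)
  have hR0pos : 0 ≤ R0 := by positivity
  have hPdiag : ∀ k i, P k i i ≤ R0 := by
    intro k i
    have h1 : C k i i = P k i i + N k i i := by rw [hsum k]; rfl
    have h2 := hNn k i i
    have := (le_abs_self (C k i i)).trans (hCb k i i)
    linarith
  have hPb : ∀ k i j, |P k i j| ≤ R0 := by
    intro k i j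
    have h1 := psd_abs_bound (hP k) i j
    have h2 := hPdiag k i
    have h3 := hPdiag k j
    linarith
  set p : ℕ → (ι × ι → ℝ) := fun k q => P k q.1 q.2 with hp
  have hmem : ∀ k, p k ∈ Metric.closedBall (0 : ι × ι → ℝ) R0 := by
    intro k
    rw [Metric.mem_closedBall, dist_pi_le_iff hR0pos]
    intro q
    simp only [Real.dist_eq, Pi.zero_apply, sub_zero]
    exact hPb k q.1 q.2
  obtain ⟨l, -, φ, hφ, hconv⟩ :=
    (isCompact_closedBall (0 : ι × ι → ℝ) R0).tendsto_subseq hmem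
  set Pl : Matrix ι ι ℝ := Matrix.of fun i j => l (i, j) with hPl
  have hPc : ∀ i j, Tendsto (fun k => P (φ k) i j) atTop (𝓝 (Pl i j)) := by
    intro i j
    exact tendsto_pi_nhds.1 hconv (i, j)
  set Nl : Matrix ι ι ℝ := A - Pl with hNl
  have hNentry : ∀ k i j, N k i j = C k i j - P k i j := by
    intro k i j; rw [hsum k]; simp
  have hNc : ∀ i j, Tendsto (fun k => N (φ k) i j) atTop (𝓝 (Nl i j)) := by
    intro i j
    have h1 : Tendsto (fun k => C (φ k) i j) atTop (𝓝 (A i j)) :=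
      (hlim i j).comp hφ.tendsto_atTop
    have := h1.sub (hPc i j)
    simpa [hNentry, hNl] using this
  refine ⟨Pl, Nl, .of_dotProduct_mulVec_nonneg ?_ ?_, ?_, ?_, by simp [hNl]⟩
  · ext i j
    have e1 : ∀ k, P (φ k) j i = P (φ k) i j := by
      intro k
      have := (hP (φ k)).1.apply i j
      simpa using this
    have h1 : Tendsto (fun k => P (φ k) j i) atTop (𝓝 (Pl i j)) := by
      simpa [e1] using hPc i j
    have := tendsto_nhds_unique h1 (hPc j i)
    simpa [conjTranspose_apply] using this.symm
  · intro x
    have hT : Tendsto (fun k => star x ⬝ᵥ (P (φ k)) *ᵥ x) atTop (𝓝 (star x ⬝ᵥ Pl *ᵥ x)) := by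
      simp only [star_trivial, dotProduct, Matrix.mulVec, dotProduct]
      refine tendsto_finset_sum _ fun i _ => Tendsto.const_mul _ ?_
      exact tendsto_finset_sum _ fun j _ => ((hPc i j).mul_const _)
    exact ge_of_tendsto' hT fun k => (hP (φ k)).dotProduct_mulVec_nonneg x
  · ext i j
    have e1 : ∀ k, N (φ k) j i = N (φ k) i j := fun k => (hN (φ k)).apply i j
    have h1 : Tendsto (fun k => N (φ k) j i) atTop (𝓝 (Nl i j)) := by
      simpa [e1] using hNc i j
    have := tendsto_nhds_unique h1 (hNc j i)
    simpa [Matrix.transpose_apply] using this.symm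
  · intro i j
    exact ge_of_tendsto' (hNc i j) fun k => hNn (φ k) i j

lemma isSPN_of_forall_eps {ι : Type*} [Fintype ι] [DecidableEq ι] (A : Matrix ι ι ℝ)
    (h : ∀ ε : ℝ, 0 < ε → ∃ M : Matrix ι ι ℝ,
      (∀ i j, 0 ≤ M i j ∧ M i j ≤ ε) ∧ IsSPN (A + M)) : IsSPN A := by
  choose M hM hSPN using fun k : ℕ => h (1/(k+1)) (by positivity)
  apply isSPN_limit A (fun k => A + M k) hSPN
  intro i j
  have hlow : ∀ k : ℕ, A i j ≤ (A + M k) i j := by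
    intro k
    have := (hM k i j).1
    simp only [Matrix.add_apply]
    linarith
  have hhigh : ∀ k : ℕ, (A + M k) i j ≤ A i j + 1/(k+1) := by
    intro k
    have := (hM k i j).2
    simp only [Matrix.add_apply]
    linarith
  have hup : Tendsto (fun k : ℕ => A i j + 1/(k+1 : ℝ)) atTop (𝓝 (A i j)) := by
    have := tendsto_const_nhds (x := A i j) (f := atTop (α := ℕ)) |>.add
      tendsto_one_div_add_atTop_nhds_zero_nat
    simpa using this
  exact tendsto_of_tendsto_of_tendsto_of_le_of_le tendsto_const_nhds hup hlow hhigh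

lemma isSPN_submatrix {ι κ : Type*} [Fintype ι] [Fintype κ] {A : Matrix ι ι ℝ}
    (h : IsSPN A) (e : κ → ι) : IsSPN (A.submatrix e e) := by
  obtain ⟨P, N, hP, hN, hNn, rfl⟩ := h
  refine ⟨P.submatrix e e, N.submatrix e e, hP.submatrix e, ?_, fun i j => hNn _ _, ?_⟩
  · unfold Matrix.IsSymm
    rw [Matrix.transpose_submatrix, hN.eq]
  · ext i j; simp

lemma dotProduct_comp_equiv {ι κ : Type*} [Fintype ι] [Fintype κ] (τ : κ ≃ ι)
    (x y : ι → ℝ) : (x ∘ τ) ⬝ᵥ (y ∘ τ) = x ⬝ᵥ y :=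
  Fintype.sum_equiv τ _ _ (fun _ => rfl)

lemma copositive_submatrix_equiv {ι κ : Type*} [Fintype ι] [Fintype κ]
    {A : Matrix ι ι ℝ} (h : Copositive A) (τ : κ ≃ ι) :
    Copositive (A.submatrix τ τ) := by
  intro x hx
  have hx' : ∀ i, 0 ≤ (x ∘ τ.symm) i := fun i => hx _
  have := h (x ∘ τ.symm) hx'
  have key : x ⬝ᵥ (A.submatrix τ τ) *ᵥ x
      = (x ∘ τ.symm) ⬝ᵥ A *ᵥ (x ∘ τ.symm) := by
    have hxy : x = (x ∘ τ.symm) ∘ τ := by funext a; simp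
    calc x ⬝ᵥ (A.submatrix τ τ) *ᵥ x
        = ((x ∘ τ.symm) ∘ τ) ⬝ᵥ ((A *ᵥ (x ∘ τ.symm)) ∘ τ) := by
          rw [Matrix.submatrix_mulVec_equiv, ← hxy]
      _ = (x ∘ τ.symm) ⬝ᵥ A *ᵥ (x ∘ τ.symm) := dotProduct_comp_equiv τ _ _
  rw [key]; exact this

lemma copositive_add {ι : Type*} [Fintype ι] {A B : Matrix ι ι ℝ}
    (hA : Copositive A) (hB : Copositive B) : Copositive (A + B) := by
  intro x hx
  have := add_nonneg (hA x hx) (hB x hx)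
  simpa [Matrix.add_mulVec, dotProduct_add] using this

lemma copositive_of_nonneg {ι : Type*} [Fintype ι] {A : Matrix ι ι ℝ}
    (h : ∀ i j, 0 ≤ A i j) : Copositive A := by
  intro x hx
  refine Finset.sum_nonneg fun i _ => mul_nonneg (hx i) ?_
  exact Finset.sum_nonneg fun j _ => mul_nonneg (h i j) (hx j)

end Aux

/-- Every subgraph of an SPN graph is an SPN graph. Here a subgraph `H`
of `G` is given by an injective map on vertices carrying edges of `H` to edges of `G`. -/
theorem isSPNGraph_of_subgraph
    {V W : Type*} [Fintype V] [Fintype W]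
    (G : SimpleGraph V) (H : SimpleGraph W)
    (f : W ↪ V) (hf : ∀ i j, H.Adj i j → G.Adj (f i) (f j))
    (hG : IsSPNGraph G) :
    IsSPNGraph H := by
  classical
  intro n A hA hcop hne
  obtain ⟨e⟩ := hne
  set φ : Fin n → V := fun i => f (e i) with hφ
  have hφinj : Function.Injective φ := f.injective.comp e.toEquiv.injective
  set S : Set V := Set.range φ with hS
  set K := ↥(Sᶜ : Set V)
  set ι := Fin n ⊕ K with hι
  set σ : ι ≃ V :=
    (Equiv.sumCongr (Equiv.ofInjective φ hφinj) (Equiv.refl K)).trans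
      (Equiv.Set.sumCompl S) with hσdef
  have hσ : ∀ i, σ (Sum.inl i) = φ i := by
    intro i
    show (Equiv.Set.sumCompl S) (((Equiv.ofInjective φ hφinj).sumCongr (Equiv.refl K)) (Sum.inl i)) = φ i
    rw [Equiv.sumCongr_apply, Sum.map_inl, Equiv.Set.sumCompl_apply_inl]
    rfl
  set A0 : Matrix ι ι ℝ := Matrix.fromBlocks A 0 0 0 with hA0
  have hA0symm : A0.IsSymm := by
    unfold Matrix.IsSymm
    rw [hA0, Matrix.fromBlocks_transpose, hA.eq]
    simp
  have hA0cop : Copositive A0 := by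
    intro x hx
    have hx' : x = Sum.elim (x ∘ Sum.inl) (x ∘ Sum.inr) := by
      funext u; cases u <;> rfl
    rw [hx', hA0, Matrix.fromBlocks_mulVec]
    simp only [Matrix.zero_mulVec, add_zero, zero_add]
    rw [sumElim_dotProduct_sumElim]
    simp only [dotProduct_zero, add_zero]
    exact hcop _ (fun i => hx (Sum.inl i))
  have hA0zero : ∀ u v : ι, u ≠ v → ¬ G.Adj (σ u) (σ v) → A0 u v = 0 := by
    rintro (i | u) (j | v) huv hnadj
    · by_contra h0
      have hij : i ≠ j := fun h => huv (by rw [h])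
      have hAdjA : (matrixGraph A).Adj i j := ⟨hij, Or.inl h0⟩
      have hH : H.Adj (e i) (e j) := e.map_rel_iff.2 hAdjA
      have hGadj : G.Adj (φ i) (φ j) := hf _ _ hH
      rw [← hσ i, ← hσ j] at hGadj
      exact hnadj hGadj
    · rfl
    · rfl
    · rfl
  -- for each ε > 0 we get that A + (small nonneg perturbation) is SPN
  apply isSPN_of_forall_eps
  intro ε hε
  set Nε : Matrix ι ι ℝ :=
    Matrix.of fun u v => if G.Adj (σ u) (σ v) ∧ A0 u v = 0 then ε else 0 with hNε
  have hNεnn : ∀ u v, 0 ≤ Nε u v := by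
    intro u v
    rw [hNε]
    simp only [Matrix.of_apply]
    split_ifs
    · exact le_of_lt hε
    · exact le_refl 0
  have hNεle : ∀ u v, Nε u v ≤ ε := by
    intro u v
    rw [hNε]
    simp only [Matrix.of_apply]
    split_ifs
    · exact le_refl ε
    · exact le_of_lt hε
  have hA0s : ∀ u v : ι, A0 v u = A0 u v := fun u v => hA0symm.apply u v
  have hNεsymm : ∀ u v, Nε v u = Nε u v := by
    intro u v
    rw [hNε]
    simp only [Matrix.of_apply]
    congr 1
    rw [eq_iff_iff]
    constructor
    · rintro ⟨h1, h2⟩; exact ⟨h1.symm, (hA0s v u).trans h2⟩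
    · rintro ⟨h1, h2⟩; exact ⟨h1.symm, (hA0s u v).trans h2⟩
  set B : Matrix ι ι ℝ := A0 + Nε with hB
  have hBsymm : B.IsSymm := by
    unfold Matrix.IsSymm
    ext u v
    simp only [Matrix.transpose_apply, hB, Matrix.add_apply]
    rw [hA0s v u, hNεsymm v u]
  have hBcop : Copositive B := copositive_add hA0cop (copositive_of_nonneg hNεnn)
  have hBadj : ∀ u v : ι, (matrixGraph B).Adj u v ↔ G.Adj (σ u) (σ v) := by
    intro u v
    constructor
    · rintro ⟨huv, h0⟩
      by_contra hnadj
      have hz : B u v = 0 := by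
        have h1 : A0 u v = 0 := hA0zero u v huv hnadj
        have h2 : Nε u v = 0 := by
          rw [hNε]; simp only [Matrix.of_apply]
          rw [if_neg]; rintro ⟨ha, -⟩; exact hnadj ha
        simp [hB, Matrix.add_apply, h1, h2]
      have hz' : B v u = 0 := by
        have h1 : A0 v u = 0 := hA0zero v u (Ne.symm huv) (fun h => hnadj h.symm)
        have h2 : Nε v u = 0 := by
          rw [hNε]; simp only [Matrix.of_apply]
          rw [if_neg]; rintro ⟨ha, -⟩; exact hnadj ha.symm
        simp [hB, Matrix.add_apply, h1, h2]
      rcases h0 with h | h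
      · exact h hz
      · exact h hz'
    · intro hadj
      have huv : u ≠ v := by
        rintro rfl
        exact G.loopless.irrefl _ hadj
      refine ⟨huv, Or.inl ?_⟩
      by_cases h0 : A0 u v = 0
      · have : Nε u v = ε := by
          rw [hNε]; simp only [Matrix.of_apply]; rw [if_pos ⟨hadj, h0⟩]
        simp only [hB, Matrix.add_apply, h0, this, zero_add]
        exact ne_of_gt hε
      · have : Nε u v = 0 := by
          rw [hNε]; simp only [Matrix.of_apply]
          rw [if_neg]; rintro ⟨-, hz⟩; exact h0 hz
        simp only [hB, Matrix.add_apply, this, add_zero]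
        exact h0
  -- transfer to Fin m
  set m := Fintype.card ι with hm
  set τ : Fin m ≃ ι := (Fintype.equivFin ι).symm with hτ
  set B' : Matrix (Fin m) (Fin m) ℝ := B.submatrix τ τ with hB'
  have hB'symm : B'.IsSymm := by
    unfold Matrix.IsSymm
    rw [hB', Matrix.transpose_submatrix, hBsymm.eq]
  have hB'cop : Copositive B' := copositive_submatrix_equiv hBcop τ
  have iso2 : matrixGraph B' ≃g matrixGraph B := by
    refine ⟨τ, ?_⟩
    intro a b
    show (matrixGraph B).Adj (τ a) (τ b) ↔ (matrixGraph B').Adj a b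
    constructor
    · rintro ⟨hne', h0⟩
      exact ⟨fun h => hne' (by rw [h]), h0⟩
    · rintro ⟨hne', h0⟩
      exact ⟨fun h => hne' (τ.injective h), h0⟩
  have iso : matrixGraph B ≃g G := by
    refine ⟨σ, ?_⟩
    intro a b
    exact (hBadj a b).symm
  have hSPNB' : IsSPN B' := hG m B' hB'symm hB'cop ⟨iso2.trans iso⟩
  have hSPNB : IsSPN B := by
    have := isSPN_submatrix hSPNB' (τ.symm : ι → Fin m)
    have heq : B'.submatrix (τ.symm : ι → Fin m) (τ.symm : ι → Fin m) = B := by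
      ext u v
      simp [hB']
    rwa [heq] at this
  have hrestr := isSPN_submatrix hSPNB (Sum.inl : Fin n → ι)
  refine ⟨Nε.submatrix (Sum.inl : Fin n → ι) (Sum.inl : Fin n → ι), ?_, ?_⟩
  · intro i j
    exact ⟨hNεnn _ _, hNεle _ _⟩
  · have heq : B.submatrix (Sum.inl : Fin n → ι) (Sum.inl : Fin n → ι)
        = A + Nε.submatrix (Sum.inl : Fin n → ι) (Sum.inl : Fin n → ι) := by
      ext i j
      simp [hB, hA0]
    rwa [heq] at hrestr
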